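/- (Theorem 1(b)) For x = 0100 as well as for x = 1000, the number of triples (S_1,S_2,S_3) of pairwise disjoint subsets of {1,…,n} that are words of type x equals ρ_1^{−2}; moreover every such word has aliasing index |V(x)| = ρ_1 and length m + X = l_1 + 1. -/

import Mathlib

open Real Finset

noncomputable section

/-- The trigonometric argument π/4 + (π/2)·t. -/
def trigArg (t : ℝ) : ℝ := Real.pi / 4 + Real.pi / 2 * t

/-- The dot product a'w = Σ_j a_j w_j as a real number. -/
def dotR {n : ℕ} (a w : Fin n → Fin 4) : ℝ :=
  ∑ j, ((a j : ℕ) : ℝ) * ((w j : ℕ) : ℝ)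

/-- ψ(a), depending on the pairwise disjoint subsets S₁, S₂, S₃. -/
def psi {n : ℕ} (S1 S2 S3 : Finset (Fin n)) (a : Fin n → Fin 4) : ℝ :=
  (∏ j ∈ S1, (Real.sin (trigArg ((a j : ℕ) : ℝ)) * Real.cos (trigArg ((a j : ℕ) : ℝ)))) *
  (∏ j ∈ S2, Real.cos (trigArg ((a j : ℕ) : ℝ))) *
  (∏ j ∈ S3, Real.sin (trigArg ((a j : ℕ) : ℝ)))

/-- φ(x; a) for a binary 4-tuple x = x₁x₂x₃x₄. -/
def phi {n : ℕ} (u v : Fin n → Fin 4) (S1 S2 S3 : Finset (Fin n))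
    (x1 x2 x3 x4 : ℕ) (a : Fin n → Fin 4) : ℝ :=
  (2 : ℝ) ^ (((2 * S1.card + S2.card + S3.card + (x1 + x2 + x3 + x4) : ℕ) : ℝ) / 2
      - 2 * (n : ℝ)) *
    Real.sin (trigArg (dotR a u)) ^ x1 * Real.cos (trigArg (dotR a u)) ^ x2 *
    Real.sin (trigArg (dotR a v)) ^ x3 * Real.cos (trigArg (dotR a v)) ^ x4 *
    psi S1 S2 S3 a

/-- V(x) = Σ_{a ∈ {0,1,2,3}ⁿ} φ(x; a). -/
def Vval {n : ℕ} (u v : Fin n → Fin 4) (S1 S2 S3 : Finset (Fin n))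
    (x1 x2 x3 x4 : ℕ) : ℝ :=
  ∑ a : Fin n → Fin 4, phi u v S1 S2 S3 x1 x2 x3 x4 a

/-- S₁, S₂, S₃ are pairwise disjoint. -/
def PairwiseDisj {n : ℕ} (S1 S2 S3 : Finset (Fin n)) : Prop :=
  Disjoint S1 S2 ∧ Disjoint S1 S3 ∧ Disjoint S2 S3

/-- (S₁,S₂,S₃) is a word of type x = x₁x₂x₃x₄. -/
def IsWord {n : ℕ} (u v : Fin n → Fin 4) (S1 S2 S3 : Finset (Fin n))
    (x1 x2 x3 x4 : ℕ) : Prop :=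
  PairwiseDisj S1 S2 S3 ∧ Vval u v S1 S2 S3 x1 x2 x3 x4 ≠ 0

/-- The length m + X of a word. -/
def wordLength {n : ℕ} (S1 S2 S3 : Finset (Fin n)) (x1 x2 x3 x4 : ℕ) : ℕ :=
  2 * S1.card + S2.card + S3.card + (x1 + x2 + x3 + x4)

/-- The set of words of type x = x₁x₂x₃x₄. -/
def wordSet {n : ℕ} (u v : Fin n → Fin 4) (x1 x2 x3 x4 : ℕ) :
    Set (Finset (Fin n) × Finset (Fin n) × Finset (Fin n)) :=
  {t | IsWord u v t.1 t.2.1 t.2.2 x1 x2 x3 x4}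

/-- The set of words of type x = x₁x₂x₃x₄ having length L. -/
def wordSetLen {n : ℕ} (u v : Fin n → Fin 4) (x1 x2 x3 x4 L : ℕ) :
    Set (Finset (Fin n) × Finset (Fin n) × Finset (Fin n)) :=
  {t | IsWord u v t.1 t.2.1 t.2.2 x1 x2 x3 x4 ∧
       wordLength t.1 t.2.1 t.2.2 x1 x2 x3 x4 = L}

/-- f_{ks} = #{j : u_j = k, v_j = s}. -/
def freq {n : ℕ} (u v : Fin n → Fin 4) (k s : Fin 4) : ℕ :=
  (Finset.univ.filter (fun j => u j = k ∧ v j = s)).card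

def lam1 {n : ℕ} (u v : Fin n → Fin 4) : ℕ := freq u v 1 0 + freq u v 3 0
def lam2 {n : ℕ} (u v : Fin n → Fin 4) : ℕ := freq u v 0 1 + freq u v 0 3
def lam3 {n : ℕ} (u v : Fin n → Fin 4) : ℕ := freq u v 1 2 + freq u v 3 2
def lam4 {n : ℕ} (u v : Fin n → Fin 4) : ℕ := freq u v 2 1 + freq u v 2 3
def lam5 {n : ℕ} (u v : Fin n → Fin 4) : ℕ := freq u v 1 1 + freq u v 3 3
def lam6 {n : ℕ} (u v : Fin n → Fin 4) : ℕ := freq u v 1 3 + freq u v 3 1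
def lam7 {n : ℕ} (u v : Fin n → Fin 4) : ℕ := freq u v 0 2
def lam8 {n : ℕ} (u v : Fin n → Fin 4) : ℕ := freq u v 2 0
def lam9 {n : ℕ} (u v : Fin n → Fin 4) : ℕ := freq u v 2 2
def lam10 {n : ℕ} (u v : Fin n → Fin 4) : ℕ := freq u v 0 0

def len1 {n : ℕ} (u v : Fin n → Fin 4) : ℕ :=
  2 * (lam4 u v + lam8 u v + lam9 u v) + lam1 u v + lam3 u v + lam5 u v + lam6 u v
def len2 {n : ℕ} (u v : Fin n → Fin 4) : ℕ :=
  2 * (lam3 u v + lam7 u v + lam9 u v) + lam2 u v + lam4 u v + lam5 u v + lam6 u v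
def len3 {n : ℕ} (u v : Fin n → Fin 4) : ℕ :=
  2 * (lam2 u v + lam8 u v + lam9 u v) + lam1 u v + lam3 u v + lam5 u v + lam6 u v
def len4 {n : ℕ} (u v : Fin n → Fin 4) : ℕ :=
  2 * (lam1 u v + lam7 u v + lam9 u v) + lam2 u v + lam4 u v + lam5 u v + lam6 u v
def len5 {n : ℕ} (u v : Fin n → Fin 4) : ℕ :=
  2 * (lam1 u v + lam3 u v + lam5 u v + lam6 u v)
def len6 {n : ℕ} (u v : Fin n → Fin 4) : ℕ :=
  2 * (lam2 u v + lam4 u v + lam5 u v + lam6 u v)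
def len7 {n : ℕ} (u v : Fin n → Fin 4) : ℕ :=
  2 * (lam1 u v + lam2 u v + lam3 u v + lam4 u v)
def len8 {n : ℕ} (u v : Fin n → Fin 4) : ℕ :=
  2 * (lam7 u v + lam8 u v) + lam1 u v + lam2 u v + lam3 u v + lam4 u v
def len9 {n : ℕ} (u v : Fin n → Fin 4) : ℕ :=
  2 * (lam5 u v + lam7 u v + lam8 u v) + lam1 u v + lam2 u v + lam3 u v + lam4 u v
def len10 {n : ℕ} (u v : Fin n → Fin 4) : ℕ :=
  2 * (lam6 u v + lam7 u v + lam8 u v) + lam1 u v + lam2 u v + lam3 u v + lam4 u v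

/-- ρ₁ = 2^{−⌊(λ₁+λ₃+λ₅+λ₆)/2⌋}. -/
def rho1 {n : ℕ} (u v : Fin n → Fin 4) : ℝ :=
  ((2 : ℝ) ^ ((lam1 u v + lam3 u v + lam5 u v + lam6 u v) / 2))⁻¹
/-- ρ₂ = 2^{−⌊(λ₂+λ₄+λ₅+λ₆)/2⌋}. -/
def rho2 {n : ℕ} (u v : Fin n → Fin 4) : ℝ :=
  ((2 : ℝ) ^ ((lam2 u v + lam4 u v + lam5 u v + lam6 u v) / 2))⁻¹
/-- ξ₁ = 2^{−⌊(λ₁+λ₃)/2⌋}. -/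
def xi1 {n : ℕ} (u v : Fin n → Fin 4) : ℝ :=
  ((2 : ℝ) ^ ((lam1 u v + lam3 u v) / 2))⁻¹
/-- ξ₂ = 2^{−⌊(λ₂+λ₄)/2⌋}. -/
def xi2 {n : ℕ} (u v : Fin n → Fin 4) : ℝ :=
  ((2 : ℝ) ^ ((lam2 u v + lam4 u v) / 2))⁻¹
/-- ξ = 2^{−⌊(λ₁+λ₂+λ₃+λ₄+1)/2⌋}. -/
def xival {n : ℕ} (u v : Fin n → Fin 4) : ℝ :=
  ((2 : ℝ) ^ ((lam1 u v + lam2 u v + lam3 u v + lam4 u v + 1) / 2))⁻¹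


section Aux
open Complex

lemma cs_complex (N : ℕ) :
    Real.cos (trigArg N) * Real.sqrt 2 = ((1+I) * I ^ N).re ∧
    Real.sin (trigArg N) * Real.sqrt 2 = ((1+I) * I ^ N).im := by
  induction N with
  | zero =>
      have h4 : trigArg ((0:ℕ):ℝ) = Real.pi/4 := by simp [trigArg]
      rw [h4, Real.cos_pi_div_four, Real.sin_pi_div_four]
      have : Real.sqrt 2 * Real.sqrt 2 = 2 := Real.mul_self_sqrt (by norm_num)
      constructor <;> · simp; nlinarith [this]
  | succ k ih =>
      have h : trigArg ((k+1 : ℕ):ℝ) = trigArg k + Real.pi/2 := by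
        simp [trigArg]; push_cast; ring
      rw [h, Real.cos_add_pi_div_two, Real.sin_add_pi_div_two,
        pow_succ, ← mul_assoc]
      rw [Complex.mul_I_re, Complex.mul_I_im]
      constructor
      · rw [neg_mul, ih.2]
      · exact ih.1

lemma sqrt2_ne : Real.sqrt 2 ≠ 0 := by positivity

lemma cos_trig (N : ℕ) : Real.cos (trigArg N) = ((1+I) * I ^ N).re / Real.sqrt 2 := by
  rw [eq_div_iff sqrt2_ne]; exact (cs_complex N).1
lemma sin_trig (N : ℕ) : Real.sin (trigArg N) = ((1+I) * I ^ N).im / Real.sqrt 2 := by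
  rw [eq_div_iff sqrt2_ne]; exact (cs_complex N).2

def epsc : Fin 4 → ℝ := ![1, -1, -1, 1]
def epss : Fin 4 → ℝ := ![1, 1, -1, -1]

lemma cos_digit (b : Fin 4) : Real.cos (trigArg (b : ℕ)) = epsc b / Real.sqrt 2 := by
  rw [cos_trig]; fin_cases b <;> simp [epsc, pow_succ] <;> norm_num
lemma sin_digit (b : Fin 4) : Real.sin (trigArg (b : ℕ)) = epss b / Real.sqrt 2 := by
  rw [sin_trig]; fin_cases b <;> simp [epss, pow_succ] <;> norm_num

def g1 {n : ℕ} (S1 S2 S3 : Finset (Fin n)) (j : Fin n) (b : Fin 4) : ℝ :=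
  if j ∈ S1 then epss b * epsc b else if j ∈ S2 then epsc b else if j ∈ S3 then epss b else 1

def Na {n : ℕ} (u : Fin n → Fin 4) (a : Fin n → Fin 4) : ℕ := ∑ j, (a j : ℕ) * (u j : ℕ)

def Tj {n : ℕ} (u : Fin n → Fin 4) (S1 S2 S3 : Finset (Fin n)) (j : Fin n) : ℂ :=
  ∑ b : Fin 4, I ^ ((b : ℕ) * (u j : ℕ)) * ((g1 S1 S2 S3 j b : ℝ) : ℂ)

lemma psi_eq {n : ℕ} (S1 S2 S3 : Finset (Fin n)) (h : PairwiseDisj S1 S2 S3)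
    (a : Fin n → Fin 4) :
    psi S1 S2 S3 a =
      (∏ j, g1 S1 S2 S3 j (a j)) / Real.sqrt 2 ^ (2 * S1.card + S2.card + S3.card) := by
  obtain ⟨h12, h13, h23⟩ := h
  have hU : (∏ j, g1 S1 S2 S3 j (a j)) = ∏ j ∈ S1 ∪ (S2 ∪ S3), g1 S1 S2 S3 j (a j) := by
    refine (Finset.prod_subset (Finset.subset_univ _) ?_).symm
    intro j _ hj
    simp only [Finset.mem_union, not_or] at hj
    simp [g1, hj.1, hj.2.1, hj.2.2]
  have hd1 : Disjoint S1 (S2 ∪ S3) := Finset.disjoint_union_right.2 ⟨h12, h13⟩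
  rw [hU, Finset.prod_union hd1, Finset.prod_union h23]
  have e1 : ∏ j ∈ S1, g1 S1 S2 S3 j (a j) = ∏ j ∈ S1, (epss (a j) * epsc (a j)) :=
    Finset.prod_congr rfl fun j hj => by simp [g1, hj]
  have e2 : ∏ j ∈ S2, g1 S1 S2 S3 j (a j) = ∏ j ∈ S2, epsc (a j) :=
    Finset.prod_congr rfl fun j hj => by
      have : j ∉ S1 := fun hc => (Finset.disjoint_left.1 h12) hc hj
      simp [g1, hj, this]
  have e3 : ∏ j ∈ S3, g1 S1 S2 S3 j (a j) = ∏ j ∈ S3, epss (a j) :=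
    Finset.prod_congr rfl fun j hj => by
      have h1 : j ∉ S1 := fun hc => (Finset.disjoint_left.1 h13) hc hj
      have h2 : j ∉ S2 := fun hc => (Finset.disjoint_left.1 h23) hc hj
      simp [g1, hj, h1, h2]
  rw [e1, e2, e3]
  have p1 : ∏ j ∈ S1, (Real.sin (trigArg ((a j : ℕ) : ℝ)) * Real.cos (trigArg ((a j : ℕ) : ℝ)))
      = (∏ j ∈ S1, (epss (a j) * epsc (a j))) / Real.sqrt 2 ^ (2 * S1.card) := by
    have step : ∏ j ∈ S1, (Real.sin (trigArg ((a j : ℕ) : ℝ)) * Real.cos (trigArg ((a j : ℕ) : ℝ)))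
          = ∏ j ∈ S1, (epss (a j) * epsc (a j)) / (Real.sqrt 2 * Real.sqrt 2) :=
      Finset.prod_congr rfl fun j _ => by
        rw [sin_digit (a j), cos_digit (a j), div_mul_div_comm]
    rw [step, Finset.prod_div_distrib, Finset.prod_const]
    congr 1
    rw [two_mul, pow_add, ← mul_pow]
  have p2 : ∏ j ∈ S2, Real.cos (trigArg ((a j : ℕ) : ℝ))
      = (∏ j ∈ S2, epsc (a j)) / Real.sqrt 2 ^ S2.card := by
    rw [Finset.prod_congr rfl (fun j _ => cos_digit (a j)), Finset.prod_div_distrib,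
      Finset.prod_const]
  have p3 : ∏ j ∈ S3, Real.sin (trigArg ((a j : ℕ) : ℝ))
      = (∏ j ∈ S3, epss (a j)) / Real.sqrt 2 ^ S3.card := by
    rw [Finset.prod_congr rfl (fun j _ => sin_digit (a j)), Finset.prod_div_distrib,
      Finset.prod_const]
  rw [psi, p1, p2, p3, pow_add, pow_add]
  field_simp

lemma pref_eq (m X nn : ℕ) :
    (2 : ℝ) ^ ((((m + X : ℕ)) : ℝ) / 2 - 2 * (nn : ℝ)) =
      Real.sqrt 2 ^ (m + X) * ((4 : ℝ) ^ nn)⁻¹ := by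
  rw [Real.rpow_sub (by norm_num : (0:ℝ) < 2)]
  have h1 : (2:ℝ) ^ ((((m + X : ℕ)) : ℝ) / 2) = Real.sqrt 2 ^ (m + X) := by
    rw [show Real.sqrt 2 = (2:ℝ) ^ ((1:ℝ)/2) from Real.sqrt_eq_rpow 2,
      ← Real.rpow_natCast ((2:ℝ) ^ ((1:ℝ)/2)) (m+X), ← Real.rpow_mul (by norm_num)]
    congr 1
    push_cast; ring
  have h2 : (2:ℝ) ^ (2 * (nn : ℝ)) = (4:ℝ) ^ nn := by
    rw [show (2:ℝ) * (nn:ℝ) = ((2 * nn : ℕ) : ℝ) by push_cast; ring,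
      Real.rpow_natCast, pow_mul]
    norm_num
  rw [h1, h2, div_eq_mul_inv]

lemma dot_eq {n : ℕ} (u : Fin n → Fin 4) (a : Fin n → Fin 4) :
    dotR a u = ((Na u a : ℕ) : ℝ) := by
  rw [dotR, Na]; push_cast; rfl

lemma phi_cos {n : ℕ} (u v : Fin n → Fin 4) (S1 S2 S3 : Finset (Fin n))
    (h : PairwiseDisj S1 S2 S3) (a : Fin n → Fin 4) :
    phi u v S1 S2 S3 0 1 0 0 a =
      ((4 : ℝ) ^ n)⁻¹ * (((1+I) * I ^ (Na u a)).re * ∏ j, g1 S1 S2 S3 j (a j)) := by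
  rw [phi, psi_eq S1 S2 S3 h a, pref_eq, dot_eq u a, cos_trig]
  have h2 : (0:ℝ) < Real.sqrt 2 := by positivity
  simp only [pow_zero, pow_one]
  field_simp
  ring

lemma phi_sin {n : ℕ} (u v : Fin n → Fin 4) (S1 S2 S3 : Finset (Fin n))
    (h : PairwiseDisj S1 S2 S3) (a : Fin n → Fin 4) :
    phi u v S1 S2 S3 1 0 0 0 a =
      ((4 : ℝ) ^ n)⁻¹ * (((1+I) * I ^ (Na u a)).im * ∏ j, g1 S1 S2 S3 j (a j)) := by
  rw [phi, psi_eq S1 S2 S3 h a, dot_eq u a, sin_trig]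
  have hm : 2 * S1.card + S2.card + S3.card + (1 + 0 + 0 + 0)
      = 2 * S1.card + S2.card + S3.card + (0 + 1 + 0 + 0) := by ring
  rw [hm, pref_eq]
  have h2 : (0:ℝ) < Real.sqrt 2 := by positivity
  simp only [pow_zero, pow_one]
  field_simp
  ring

lemma sum_eq_prodT {n : ℕ} (u : Fin n → Fin 4) (S1 S2 S3 : Finset (Fin n)) :
    ∑ a : Fin n → Fin 4, (1+I) * I ^ (Na u a) * ((∏ j, g1 S1 S2 S3 j (a j) : ℝ) : ℂ)
      = (1+I) * ∏ j, Tj u S1 S2 S3 j := by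
  have key : ∀ a : Fin n → Fin 4,
      I ^ (Na u a) * ((∏ j, g1 S1 S2 S3 j (a j) : ℝ) : ℂ)
        = ∏ j, (I ^ ((a j : ℕ) * (u j : ℕ)) * ((g1 S1 S2 S3 j (a j) : ℝ) : ℂ)) := by
    intro a
    rw [Na, ← Finset.prod_pow_eq_pow_sum, Complex.ofReal_prod, Finset.prod_mul_distrib]
  simp only [mul_assoc, key]
  rw [← Finset.mul_sum]
  congr 1
  exact (Fintype.prod_sum (κ := fun _ : Fin n => Fin 4)
    fun j (b : Fin 4) => I ^ ((b : ℕ) * (u j : ℕ)) * ((g1 S1 S2 S3 j b : ℝ) : ℂ)).symm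

lemma Vform_cos {n : ℕ} (u v : Fin n → Fin 4) (S1 S2 S3 : Finset (Fin n))
    (h : PairwiseDisj S1 S2 S3) :
    Vval u v S1 S2 S3 0 1 0 0 = ((4 : ℝ) ^ n)⁻¹ * ((1+I) * ∏ j, Tj u S1 S2 S3 j).re := by
  rw [Vval, ← sum_eq_prodT u S1 S2 S3, Complex.re_sum, Finset.mul_sum]
  refine Finset.sum_congr rfl fun a _ => ?_
  rw [phi_cos u v S1 S2 S3 h a]
  congr 1
  simp [Complex.mul_re, ← Complex.ofReal_prod]

lemma Vform_sin {n : ℕ} (u v : Fin n → Fin 4) (S1 S2 S3 : Finset (Fin n))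
    (h : PairwiseDisj S1 S2 S3) :
    Vval u v S1 S2 S3 1 0 0 0 = ((4 : ℝ) ^ n)⁻¹ * ((1+I) * ∏ j, Tj u S1 S2 S3 j).im := by
  rw [Vval, ← sum_eq_prodT u S1 S2 S3, Complex.im_sum, Finset.mul_sum]
  refine Finset.sum_congr rfl fun a _ => ?_
  rw [phi_sin u v S1 S2 S3 h a]
  congr 1
  simp [Complex.mul_im, ← Complex.ofReal_prod]

lemma f40 : ((0:Fin 4):ℕ) = 0 := rfl
lemma f41 : ((1:Fin 4):ℕ) = 1 := rfl
lemma f42 : ((2:Fin 4):ℕ) = 2 := rfl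
lemma f43 : ((3:Fin 4):ℕ) = 3 := rfl

lemma fin4_cases (c : Fin 4) : c = 0 ∨ c = 1 ∨ c = 2 ∨ c = 3 := by fin_cases c <;> simp

lemma Tj_none {n : ℕ} (u : Fin n → Fin 4) (S1 S2 S3 : Finset (Fin n)) (j : Fin n)
    (h1 : j ∉ S1) (h2 : j ∉ S2) (h3 : j ∉ S3) :
    Tj u S1 S2 S3 j = if u j = 0 then 4 else 0 := by
  rcases fin4_cases (u j) with h | h | h | h <;>
    simp [Tj, g1, h1, h2, h3, h, Fin.sum_univ_four, f40, f41, f42, f43, f40, f41, f42, f43] <;> norm_num [pow_succ]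

lemma Tj_S1 {n : ℕ} (u : Fin n → Fin 4) (S1 S2 S3 : Finset (Fin n)) (j : Fin n)
    (h1 : j ∈ S1) :
    Tj u S1 S2 S3 j = if u j = 2 then 4 else 0 := by
  rcases fin4_cases (u j) with h | h | h | h <;>
    simp [Tj, g1, h1, h, Fin.sum_univ_four, f40, f41, f42, f43, epss, epsc] <;> norm_num [pow_succ] <;> ring

lemma Tj_S2 {n : ℕ} (u : Fin n → Fin 4) (S1 S2 S3 : Finset (Fin n)) (j : Fin n)
    (h1 : j ∉ S1) (h2 : j ∈ S2) :
    Tj u S1 S2 S3 j = if u j = 1 then 2*(1+I)*(-I) else if u j = 3 then 2*(1+I) else 0 := by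
  rcases fin4_cases (u j) with h | h | h | h <;>
    simp [Tj, g1, h1, h2, h, Fin.sum_univ_four, f40, f41, f42, f43, epsc] <;> norm_num [pow_succ] <;> ring_nf <;>
    simp [Complex.ext_iff]
lemma Tj_S3 {n : ℕ} (u : Fin n → Fin 4) (S1 S2 S3 : Finset (Fin n)) (j : Fin n)
    (h1 : j ∉ S1) (h2 : j ∉ S2) (h3 : j ∈ S3) :
    Tj u S1 S2 S3 j = if u j = 1 then 2*(1+I) else if u j = 3 then 2*(1+I)*(-I) else 0 := by
  rcases fin4_cases (u j) with h | h | h | h <;>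
    simp [Tj, g1, h1, h2, h3, h, Fin.sum_univ_four, f40, f41, f42, f43, f40, f41, f42, f43, epss] <;> norm_num [pow_succ] <;> ring_nf <;>
    simp [Complex.ext_iff]

variable {n : ℕ}

def Oset (u : Fin n → Fin 4) : Finset (Fin n) := univ.filter (fun j => u j = 1 ∨ u j = 3)
def TwSet (u : Fin n → Fin 4) : Finset (Fin n) := univ.filter (fun j => u j = 2)

def Good (u : Fin n → Fin 4) (S1 S2 S3 : Finset (Fin n)) : Prop :=
  S1 = TwSet u ∧ S2 ∪ S3 = Oset u

def minusSet (u : Fin n → Fin 4) (S2 S3 : Finset (Fin n)) : Finset (Fin n) :=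
  (Oset u).filter (fun j => (u j = 1 ∧ j ∈ S2) ∨ (u j = 3 ∧ j ∈ S3))

lemma prod_Tj_zero (u : Fin n → Fin 4) (S1 S2 S3 : Finset (Fin n))
    (h : PairwiseDisj S1 S2 S3) (hg : ¬ Good u S1 S2 S3) :
    ∏ j, Tj u S1 S2 S3 j = 0 := by
  obtain ⟨h12, h13, h23⟩ := h
  by_contra hne
  apply hg
  have hjne : ∀ j, Tj u S1 S2 S3 j ≠ 0 := by
    intro j hj
    exact hne (Finset.prod_eq_zero (Finset.mem_univ j) hj)
  have key : ∀ j, (j ∈ S1 ↔ u j = 2) ∧ ((j ∈ S2 ∨ j ∈ S3) ↔ (u j = 1 ∨ u j = 3)) := by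
    intro j
    by_cases hj1 : j ∈ S1
    · have hu : u j = 2 := by
        by_contra hu
        exact hjne j (by rw [Tj_S1 u S1 S2 S3 j hj1, if_neg hu])
      have hj2 : j ∉ S2 := fun hc => (Finset.disjoint_left.1 h12) hj1 hc
      have hj3 : j ∉ S3 := fun hc => (Finset.disjoint_left.1 h13) hj1 hc
      constructor
      · simp [hj1, hu]
      · simp [hj2, hj3, hu]
    · by_cases hj2 : j ∈ S2
      · have hu : u j = 1 ∨ u j = 3 := by
          by_contra hu
          push_neg at hu
          exact hjne j (by rw [Tj_S2 u S1 S2 S3 j hj1 hj2, if_neg hu.1, if_neg hu.2])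
        have : u j ≠ 2 := by rcases hu with h | h <;> simp [h]
        simp [hj1, hj2, hu, this]
      · by_cases hj3 : j ∈ S3
        · have hu : u j = 1 ∨ u j = 3 := by
            by_contra hu
            push_neg at hu
            exact hjne j (by rw [Tj_S3 u S1 S2 S3 j hj1 hj2 hj3, if_neg hu.1, if_neg hu.2])
          have : u j ≠ 2 := by rcases hu with h | h <;> simp [h]
          simp [hj1, hj2, hj3, hu, this]
        · have hu : u j = 0 := by
            by_contra hu
            exact hjne j (by rw [Tj_none u S1 S2 S3 j hj1 hj2 hj3, if_neg hu])
          simp [hj1, hj2, hj3, hu]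
  constructor
  · ext j
    rw [TwSet, Finset.mem_filter]
    have := (key j).1
    simp [this]
  · ext j
    rw [Oset, Finset.mem_filter, Finset.mem_union]
    have := (key j).2
    simp [this]

lemma prod_Tj_good (u : Fin n → Fin 4) (S1 S2 S3 : Finset (Fin n))
    (h : PairwiseDisj S1 S2 S3) (hg : Good u S1 S2 S3) :
    ∏ j, Tj u S1 S2 S3 j =
      4 ^ (n - (Oset u).card) * 2 ^ (Oset u).card * (1+I) ^ (Oset u).card *
        (-I) ^ (minusSet u S2 S3).card := by
  obtain ⟨h12, h13, h23⟩ := h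
  obtain ⟨hg1, hg2⟩ := hg
  rw [← Finset.prod_filter_mul_prod_filter_not univ (fun j => u j = 1 ∨ u j = 3)]
  have hOT : ∀ j ∈ Oset u, Tj u S1 S2 S3 j
      = 2 * (1+I) * (if (u j = 1 ∧ j ∈ S2) ∨ (u j = 3 ∧ j ∈ S3) then -I else 1) := by
    intro j hj
    rw [Oset, Finset.mem_filter] at hj
    have hodd := hj.2
    have hj1 : j ∉ S1 := by
      intro hc
      rw [hg1, TwSet, Finset.mem_filter] at hc
      rcases hodd with h | h <;> rw [h] at hc <;> simp at hc
    have hj23 : j ∈ S2 ∪ S3 := by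
      rw [hg2, Oset, Finset.mem_filter]; exact ⟨Finset.mem_univ j, hodd⟩
    rcases Finset.mem_union.1 hj23 with hj2 | hj3
    · rw [Tj_S2 u S1 S2 S3 j hj1 hj2]
      rcases hodd with h | h
      · rw [if_pos h, if_pos (Or.inl ⟨h, hj2⟩)]
      · have : u j ≠ 1 := by rw [h]; decide
        rw [if_neg this, if_pos h, if_neg]
        · ring
        · rintro (⟨h1, -⟩ | ⟨-, h3⟩)
          · exact this h1
          · exact (Finset.disjoint_left.1 h23) hj2 h3
    · have hj2 : j ∉ S2 := fun hc => (Finset.disjoint_left.1 h23) hc hj3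
      rw [Tj_S3 u S1 S2 S3 j hj1 hj2 hj3]
      rcases hodd with h | h
      · rw [if_pos h, if_neg]
        · ring
        · rintro (⟨-, h2⟩ | ⟨h3, -⟩)
          · exact hj2 h2
          · rw [h] at h3; exact absurd h3 (by decide)
      · have : u j ≠ 1 := by rw [h]; decide
        rw [if_neg this, if_pos h, if_pos (Or.inr ⟨h, hj3⟩)]
  have hO : ∏ j ∈ univ.filter (fun j => u j = 1 ∨ u j = 3), Tj u S1 S2 S3 j
      = 2 ^ (Oset u).card * (1+I) ^ (Oset u).card * (-I) ^ (minusSet u S2 S3).card := by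
    rw [show univ.filter (fun j => u j = 1 ∨ u j = 3) = Oset u from rfl,
      Finset.prod_congr rfl hOT, Finset.prod_mul_distrib, Finset.prod_const,
      Finset.prod_ite, Finset.prod_const, Finset.prod_const, one_pow, mul_one, mul_pow]
    rfl
  have hNO : ∏ j ∈ univ.filter (fun j => ¬(u j = 1 ∨ u j = 3)), Tj u S1 S2 S3 j
      = 4 ^ (n - (Oset u).card) := by
    have hval : ∀ j ∈ univ.filter (fun j => ¬(u j = 1 ∨ u j = 3)),
        Tj u S1 S2 S3 j = 4 := by
      intro j hj
      rw [Finset.mem_filter] at hj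
      have hodd := hj.2
      push_neg at hodd
      rcases fin4_cases (u j) with h | h | h | h
      · have hj1 : j ∉ S1 := by
          rw [hg1, TwSet, Finset.mem_filter]; rw [h]; simp
        have hj23 : j ∉ S2 ∪ S3 := by
          rw [hg2, Oset, Finset.mem_filter]; rw [h]; simp
        rw [Finset.mem_union] at hj23
        push_neg at hj23
        rw [Tj_none u S1 S2 S3 j hj1 hj23.1 hj23.2, if_pos h]
      · exact absurd h hodd.1
      · have hj1 : j ∈ S1 := by
          rw [hg1, TwSet, Finset.mem_filter]; exact ⟨Finset.mem_univ j, h⟩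
        rw [Tj_S1 u S1 S2 S3 j hj1, if_pos h]
      · exact absurd h hodd.2
    rw [Finset.prod_congr rfl hval, Finset.prod_const]
    congr 1
    have := Finset.card_filter_add_card_filter_not (s := univ)
      (p := fun j => u j = 1 ∨ u j = 3)
    simp only [Finset.card_univ, Fintype.card_fin] at this
    rw [show univ.filter (fun j => u j = 1 ∨ u j = 3) = Oset u from rfl] at this
    omega
  rw [hO, hNO]
  ring

lemma I_pow_mod (m : ℕ) : I ^ m = I ^ (m % 4) := by
  conv_lhs => rw [← Nat.div_add_mod m 4]
  rw [pow_add, pow_mul, Complex.I_pow_four, one_pow, one_mul]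

lemma abs_reim_Ipow (m : ℕ) :
    (|(I ^ m).re| = if m % 2 = 0 then 1 else 0) ∧
      (|(I ^ m).im| = if m % 2 = 1 then 1 else 0) := by
  rw [I_pow_mod]
  have h4 : m % 4 = 0 ∨ m % 4 = 1 ∨ m % 4 = 2 ∨ m % 4 = 3 := by omega
  have h2 : m % 2 = m % 4 % 2 := by omega
  rcases h4 with h | h | h | h <;> rw [h] at h2 ⊢ <;>
    norm_num [h2, pow_succ, Complex.ext_iff]

lemma abs_reim_Ipow_mul (m : ℕ) :
    |(I ^ m * (1 + I)).re| = 1 ∧ |(I ^ m * (1 + I)).im| = 1 := by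
  rw [I_pow_mod]
  have h4 : m % 4 = 0 ∨ m % 4 = 1 ∨ m % 4 = 2 ∨ m % 4 = 3 := by omega
  rcases h4 with h | h | h | h <;> rw [h] <;>
    norm_num [pow_succ, Complex.ext_iff, Complex.add_re, Complex.mul_re]

lemma one_add_I_sq : (1 + I) ^ 2 = 2 * I := by
  have := Complex.I_sq
  ring_nf
  linear_combination this

lemma unit_even (r q : ℕ) (hr : r % 2 = 0) :
    |((1+I)^(r+1) * (-I)^q).re| = 2 ^ (r/2) ∧
      |((1+I)^(r+1) * (-I)^q).im| = 2 ^ (r/2) := by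
  have hk : r + 1 = 2 * (r/2) + 1 := by omega
  set k := r / 2
  have hrw : (1+I)^(r+1) * (-I)^q
      = ((((2:ℝ)^k * (-1)^q : ℝ)) : ℂ) * (I ^ (k + q) * (1+I)) := by
    rw [hk, pow_add, pow_mul, one_add_I_sq, pow_one, mul_pow, neg_pow I q]
    push_cast
    rw [pow_add]
    ring
  have habs : |(2:ℝ)^k * (-1)^q| = 2^k := by
    rw [abs_mul, _root_.abs_pow, _root_.abs_pow]
    norm_num
  rw [hrw]
  constructor
  · rw [Complex.re_ofReal_mul, abs_mul, habs, (abs_reim_Ipow_mul (k+q)).1, mul_one]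
  · rw [Complex.im_ofReal_mul, abs_mul, habs, (abs_reim_Ipow_mul (k+q)).2, mul_one]

lemma unit_odd (r q : ℕ) (hr : r % 2 = 1) :
    (|((1+I)^(r+1) * (-I)^q).re| = if ((r+1)/2 + q) % 2 = 0 then 2 ^ ((r+1)/2) else 0) ∧
      (|((1+I)^(r+1) * (-I)^q).im| = if ((r+1)/2 + q) % 2 = 1 then 2 ^ ((r+1)/2) else 0) := by
  have hk : r + 1 = 2 * ((r+1)/2) := by omega
  set k := (r+1) / 2
  have hrw : (1+I)^(r+1) * (-I)^q
      = ((((2:ℝ)^k * (-1)^q : ℝ)) : ℂ) * I ^ (k + q) := by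
    rw [hk, pow_mul, one_add_I_sq, mul_pow, neg_pow I q]
    push_cast
    rw [pow_add]
    ring
  have habs : |(2:ℝ)^k * (-1)^q| = 2^k := by
    rw [abs_mul, _root_.abs_pow, _root_.abs_pow]
    norm_num
  rw [hrw]
  constructor
  · rw [Complex.re_ofReal_mul, abs_mul, habs, (abs_reim_Ipow (k+q)).1]
    split_ifs <;> norm_num
  · rw [Complex.im_ofReal_mul, abs_mul, habs, (abs_reim_Ipow (k+q)).2]
    split_ifs <;> norm_num

lemma arith (nn r k : ℕ) (hrn : r ≤ nn) (hk : 2*k = r + r % 2) :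
    ((4:ℝ)^nn)⁻¹ * (4^(nn-r) * 2^r) * 2^k = ((2:ℝ)^(r/2))⁻¹ := by
  have key : ((4:ℝ)^nn)⁻¹ * (4^(nn-r) * 2^r) * 2^k * 2^(r/2) = 1 := by
    have h1 : (2:ℝ)^r * 2^k * 2^(r/2) = 4^r := by
      rw [← pow_add, ← pow_add, (show (4:ℝ) = 2^2 by norm_num), ← pow_mul]
      congr 1
      omega
    have h2 : (4:ℝ)^(nn-r) * 4^r = 4^nn := by
      rw [← pow_add]
      congr 1
      omega
    calc ((4:ℝ)^nn)⁻¹ * (4^(nn-r) * 2^r) * 2^k * 2^(r/2)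
        = ((4:ℝ)^nn)⁻¹ * (4^(nn-r) * (2^r * 2^k * 2^(r/2))) := by ring
      _ = ((4:ℝ)^nn)⁻¹ * (4^(nn-r) * 4^r) := by rw [h1]
      _ = 1 := by rw [h2]; field_simp
  field_simp at key ⊢
  linarith [key]

lemma q_plus (u : Fin n → Fin 4) (S2 S3 : Finset (Fin n)) (h23 : Disjoint S2 S3)
    (hg2 : S2 ∪ S3 = Oset u) :
    (minusSet u S2 S3).card + 2 * ((S2.filter (fun j => u j = 3)).card)
      = S2.card + (univ.filter (fun j => u j = 3)).card := by
  have hmem : ∀ j, j ∈ S2 ∨ j ∈ S3 ↔ (u j = 1 ∨ u j = 3) := by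
    intro j
    constructor
    · intro hj
      have : j ∈ Oset u := hg2 ▸ Finset.mem_union.2 hj
      rw [Oset, Finset.mem_filter] at this
      exact this.2
    · intro hj
      have : j ∈ S2 ∪ S3 := by rw [hg2, Oset, Finset.mem_filter]; exact ⟨Finset.mem_univ j, hj⟩
      exact Finset.mem_union.1 this
  have hmS : minusSet u S2 S3
      = univ.filter (fun j => (u j = 1 ∧ j ∈ S2) ∨ (u j = 3 ∧ j ∈ S3)) := by
    ext j
    simp only [minusSet, Oset, Finset.mem_filter, Finset.mem_univ, true_and]
    tauto
  have hS2 : S2.card = (univ.filter (fun j => j ∈ S2)).card := by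
    congr 1
    simp
  have hf : (S2.filter (fun j => u j = 3)).card
      = (univ.filter (fun j => j ∈ S2 ∧ u j = 3)).card := by
    congr 1
    ext j
    simp [Finset.mem_filter, and_comm]
  rw [hmS, hS2, hf]
  simp only [Finset.card_filter]
  rw [← Finset.sum_add_distrib, Finset.mul_sum, ← Finset.sum_add_distrib]
  refine Finset.sum_congr rfl fun j _ => ?_
  have hd : ¬ (j ∈ S2 ∧ j ∈ S3) := fun hc => (Finset.disjoint_left.1 h23) hc.1 hc.2
  have h13 : ¬ (u j = 1 ∧ u j = 3) := by
    rintro ⟨h1, h3⟩; rw [h1] at h3; exact absurd h3 (by decide)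
  have hm := hmem j
  by_cases hj2 : j ∈ S2 <;> by_cases hj3 : j ∈ S3 <;>
    by_cases hu1 : u j = 1 <;> by_cases hu3 : u j = 3 <;>
    simp [hj2, hj3, hu1, hu3] at hm hd h13 ⊢ <;> omega

lemma card_filter_parity_eq (O : Finset (Fin n)) (hO : O.Nonempty) :
    ((O.powerset.filter (fun S => S.card % 2 = 0)).card
      = (O.powerset.filter (fun S => S.card % 2 = 1)).card) := by
  obtain ⟨j0, hj0⟩ := hO
  have toggle_mem : ∀ S ∈ O.powerset.filter (fun S => S.card % 2 = 0),
      (if j0 ∈ S then S.erase j0 else insert j0 S) ∈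
        O.powerset.filter (fun S => S.card % 2 = 1) := by
    intro S hS
    rw [Finset.mem_filter, Finset.mem_powerset] at hS ⊢
    by_cases hj : j0 ∈ S
    · rw [if_pos hj]
      refine ⟨(Finset.erase_subset j0 S).trans hS.1, ?_⟩
      rw [Finset.card_erase_of_mem hj]
      have : 1 ≤ S.card := Finset.card_pos.2 ⟨j0, hj⟩
      omega
    · rw [if_neg hj]
      refine ⟨Finset.insert_subset hj0 hS.1, ?_⟩
      rw [Finset.card_insert_of_notMem hj]
      omega
  have toggle_mem' : ∀ S ∈ O.powerset.filter (fun S => S.card % 2 = 1),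
      (if j0 ∈ S then S.erase j0 else insert j0 S) ∈
        O.powerset.filter (fun S => S.card % 2 = 0) := by
    intro S hS
    rw [Finset.mem_filter, Finset.mem_powerset] at hS ⊢
    by_cases hj : j0 ∈ S
    · rw [if_pos hj]
      refine ⟨(Finset.erase_subset j0 S).trans hS.1, ?_⟩
      rw [Finset.card_erase_of_mem hj]
      have : 1 ≤ S.card := Finset.card_pos.2 ⟨j0, hj⟩
      omega
    · rw [if_neg hj]
      refine ⟨Finset.insert_subset hj0 hS.1, ?_⟩
      rw [Finset.card_insert_of_notMem hj]
      omega
  have toggle_invol : ∀ S : Finset (Fin n),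
      (if j0 ∈ (if j0 ∈ S then S.erase j0 else insert j0 S)
        then (if j0 ∈ S then S.erase j0 else insert j0 S).erase j0
        else insert j0 (if j0 ∈ S then S.erase j0 else insert j0 S)) = S := by
    intro S
    by_cases hj : j0 ∈ S
    · rw [if_pos hj, if_neg (Finset.notMem_erase j0 S), Finset.insert_erase hj]
    · rw [if_neg hj, if_pos (Finset.mem_insert_self j0 S), Finset.erase_insert hj]
  exact Finset.card_bij' (fun S _ => if j0 ∈ S then S.erase j0 else insert j0 S)
    (fun S _ => if j0 ∈ S then S.erase j0 else insert j0 S)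
    toggle_mem toggle_mem' (fun S _ => toggle_invol S) (fun S _ => toggle_invol S)

lemma count_parity (O : Finset (Fin n)) (hO : O.Nonempty) (t : ℕ) (ht : t < 2) :
    (O.powerset.filter (fun S => S.card % 2 = t)).card = 2 ^ (O.card - 1) := by
  have hsplit := Finset.card_filter_add_card_filter_not
    (s := O.powerset) (p := fun S => S.card % 2 = 0)
  have hneg : O.powerset.filter (fun S => ¬ S.card % 2 = 0)
      = O.powerset.filter (fun S => S.card % 2 = 1) := by
    apply Finset.filter_congr
    intro S _
    constructor
    · intro h; simpa using Nat.mod_two_eq_zero_or_one S.card |>.resolve_left h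
    · intro h; omega
  rw [hneg, Finset.card_powerset] at hsplit
  have heq := card_filter_parity_eq O hO
  have hc : 1 ≤ O.card := Finset.card_pos.2 hO
  have h2 : 2 ^ O.card = 2 * 2 ^ (O.card - 1) := by
    rw [← pow_succ']
    congr 1
    omega
  interval_cases t
  · omega
  · omega

lemma lam_odd (u v : Fin n → Fin 4) :
    lam1 u v + lam3 u v + lam5 u v + lam6 u v = (Oset u).card := by
  simp only [lam1, lam3, lam5, lam6, freq, Oset, Finset.card_filter,
    ← Finset.sum_add_distrib]
  refine Finset.sum_congr rfl fun j _ => ?_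
  rcases fin4_cases (u j) with h|h|h|h <;> rcases fin4_cases (v j) with h'|h'|h'|h' <;>
    simp [h, h']

lemma lam_two (u v : Fin n → Fin 4) :
    lam4 u v + lam8 u v + lam9 u v = (TwSet u).card := by
  simp only [lam4, lam8, lam9, freq, TwSet, Finset.card_filter, ← Finset.sum_add_distrib]
  refine Finset.sum_congr rfl fun j _ => ?_
  rcases fin4_cases (u j) with h|h|h|h <;> rcases fin4_cases (v j) with h'|h'|h'|h' <;>
    simp [h, h']

def prt (b : Bool) (z : ℂ) : ℝ := if b then z.re else z.im

lemma prt_ofReal_mul (b : Bool) (c : ℝ) (z : ℂ) : prt b (↑c * z) = c * prt b z := by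
  cases b <;> simp [prt, Complex.re_ofReal_mul, Complex.im_ofReal_mul]

lemma prt_abs (b : Bool) (r q : ℕ) :
    |prt b ((1+I)^(r+1) * (-I)^q)| =
      if r % 2 = 0 then 2^(r/2)
      else (if ((r+1)/2 + q) % 2 = (if b then 0 else 1) then 2^((r+1)/2) else 0) := by
  by_cases hr : r % 2 = 0
  · rw [if_pos hr]
    cases b
    · exact (unit_even r q hr).2
    · exact (unit_even r q hr).1
  · have hr1 : r % 2 = 1 := by omega
    rw [if_neg hr]
    cases b
    · have := (unit_odd r q hr1).2
      simp only [prt, Bool.false_eq_true, if_false]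
      rw [this]
    · have := (unit_odd r q hr1).1
      simp only [prt, if_true]
      rw [this]

lemma main_core (u v : Fin n → Fin 4) (b : Bool) (x1 x2 x3 x4 : ℕ)
    (hsum : x1 + x2 + x3 + x4 = 1)
    (hV : ∀ S1 S2 S3 : Finset (Fin n), PairwiseDisj S1 S2 S3 →
      Vval u v S1 S2 S3 x1 x2 x3 x4
        = ((4:ℝ)^n)⁻¹ * prt b ((1+I) * ∏ j, Tj u S1 S2 S3 j)) :
    ((wordSet u v x1 x2 x3 x4).ncard : ℝ) = ((rho1 u v)⁻¹) ^ 2 ∧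
    ∀ S1 S2 S3 : Finset (Fin n), IsWord u v S1 S2 S3 x1 x2 x3 x4 →
      |Vval u v S1 S2 S3 x1 x2 x3 x4| = rho1 u v ∧
      wordLength S1 S2 S3 x1 x2 x3 x4 = len1 u v + 1 := by
  classical
  set O := Oset u with hO
  set Tw := TwSet u with hTw
  set r := O.card with hr
  have hrn : r ≤ n := by
    have := Finset.card_le_card (Finset.filter_subset (fun j => u j = 1 ∨ u j = 3)
      (univ : Finset (Fin n)))
    simpa [hr, hO, Oset] using this
  set t : ℕ := ((if b then 0 else 1) + (r+1)/2
      + (univ.filter (fun j => u j = 3)).card) % 2 with ht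
  have hrho : rho1 u v = ((2:ℝ) ^ (r / 2))⁻¹ := by
    rw [rho1, lam_odd u v]
  have habsV : ∀ S1 S2 S3 : Finset (Fin n), PairwiseDisj S1 S2 S3 → Good u S1 S2 S3 →
      |Vval u v S1 S2 S3 x1 x2 x3 x4|
        = ((4:ℝ)^n)⁻¹ * (4^(n-r) * 2^r) *
            |prt b ((1+I)^(r+1) * (-I)^((minusSet u S2 S3).card))| := by
    intro S1 S2 S3 hd hg
    rw [hV S1 S2 S3 hd, prod_Tj_good u S1 S2 S3 hd hg]
    have hrw : (1+I) * ((4:ℂ) ^ (n - r) * 2 ^ r * (1+I) ^ r * (-I) ^ (minusSet u S2 S3).card)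
        = ((((4:ℝ)^(n-r) * 2^r : ℝ)) : ℂ)
            * ((1+I)^(r+1) * (-I)^((minusSet u S2 S3).card)) := by
      push_cast
      ring
    rw [hrw, prt_ofReal_mul, abs_mul, abs_mul]
    rw [abs_of_pos (show (0:ℝ) < ((4:ℝ)^n)⁻¹ by positivity),
      abs_of_pos (show (0:ℝ) < (4:ℝ)^(n-r) * 2^r by positivity)]
    ring
  have hqp : ∀ S2 : Finset (Fin n), S2 ⊆ O →
      ((minusSet u S2 (O \ S2)).card) % 2
        = (S2.card + (univ.filter (fun j => u j = 3)).card) % 2 := by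
    intro S2 hS2
    have := q_plus u S2 (O \ S2) (Finset.disjoint_sdiff)
      (by rw [Finset.union_sdiff_of_subset hS2])
    omega
  have hcond : ∀ S2 : Finset (Fin n), S2 ⊆ O →
      (((r+1)/2 + (minusSet u S2 (O \ S2)).card) % 2 = (if b then 0 else 1)
        ↔ S2.card % 2 = t) := by
    intro S2 hS2
    have h1 := hqp S2 hS2
    cases b <;> simp only [ht] <;> norm_num <;> omega
  have hTwO : ∀ j, j ∈ Tw → j ∉ O := by
    intro j hj ho
    rw [hTw, TwSet, Finset.mem_filter] at hj
    rw [hO, Oset, Finset.mem_filter] at ho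
    rcases ho.2 with h | h <;> rw [hj.2] at h <;> exact absurd h (by decide)
  have hchar : ∀ S1 S2 S3 : Finset (Fin n),
      IsWord u v S1 S2 S3 x1 x2 x3 x4 ↔
        (S1 = Tw ∧ S2 ⊆ O ∧ S3 = O \ S2 ∧ (r % 2 = 1 → S2.card % 2 = t)) := by
    intro S1 S2 S3
    constructor
    · rintro ⟨hd, hne⟩
      have hg : Good u S1 S2 S3 := by
        by_contra hng
        apply hne
        rw [hV S1 S2 S3 hd, prod_Tj_zero u S1 S2 S3 hd hng, mul_zero]
        cases b <;> simp [prt]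
      obtain ⟨hg1, hg2⟩ := hg
      have hS2O : S2 ⊆ O := by
        intro j hj
        rw [hO, ← hg2]
        exact Finset.mem_union_left _ hj
      have hS3 : S3 = O \ S2 := by
        ext j
        rw [Finset.mem_sdiff, hO, ← hg2, Finset.mem_union]
        constructor
        · intro hj
          exact ⟨Or.inr hj, fun hc => (Finset.disjoint_left.1 hd.2.2) hc hj⟩
        · rintro ⟨hj | hj, hn2⟩
          · exact absurd hj hn2
          · exact hj
      subst hS3
      refine ⟨hg1, hS2O, rfl, ?_⟩
      intro hrodd
      have habs := habsV S1 S2 (O \ S2) hd ⟨hg1, hg2⟩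
      rw [prt_abs, if_neg (by omega)] at habs
      by_contra hpar
      rw [← hcond S2 hS2O] at hpar
      rw [if_neg hpar, mul_zero] at habs
      exact hne (abs_eq_zero.1 habs)
    · rintro ⟨h1, hS2O, hS3, hpar⟩
      subst h1
      subst hS3
      have hd : PairwiseDisj Tw S2 (O \ S2) := by
        refine ⟨?_, ?_, Finset.disjoint_sdiff⟩
        · rw [Finset.disjoint_left]
          exact fun j hj hc => (hTwO j hj) (hS2O hc)
        · rw [Finset.disjoint_left]
          exact fun j hj hc => (hTwO j hj) (Finset.mem_sdiff.1 hc).1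
      have hg : Good u Tw S2 (O \ S2) :=
        ⟨hTw, by rw [Finset.union_sdiff_of_subset hS2O]⟩
      refine ⟨hd, ?_⟩
      intro hzero
      have habs := habsV Tw S2 (O \ S2) hd hg
      rw [hzero, abs_zero, prt_abs] at habs
      by_cases hre : r % 2 = 0
      · rw [if_pos hre] at habs
        have : (0:ℝ) < ((4:ℝ)^n)⁻¹ * (4^(n-r) * 2^r) * 2^(r/2) := by positivity
        linarith
      · rw [if_neg hre, if_pos ((hcond S2 hS2O).2 (hpar (by omega)))] at habs
        have : (0:ℝ) < ((4:ℝ)^n)⁻¹ * (4^(n-r) * 2^r) * 2^((r+1)/2) := by positivity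
        linarith
  have hwords : ∀ S1 S2 S3 : Finset (Fin n), IsWord u v S1 S2 S3 x1 x2 x3 x4 →
      |Vval u v S1 S2 S3 x1 x2 x3 x4| = rho1 u v ∧
      wordLength S1 S2 S3 x1 x2 x3 x4 = len1 u v + 1 := by
    intro S1 S2 S3 hw
    obtain ⟨h1, hS2O, hS3, hpar⟩ := (hchar S1 S2 S3).1 hw
    obtain ⟨hd, hne⟩ := hw
    have hg : Good u S1 S2 S3 := by
      subst h1
      subst hS3
      exact ⟨hTw, by rw [Finset.union_sdiff_of_subset hS2O]⟩
    constructor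
    · have habs := habsV S1 S2 S3 hd hg
      rw [prt_abs] at habs
      by_cases hre : r % 2 = 0
      · rw [if_pos hre] at habs
        rw [habs, hrho]
        exact arith n r (r/2) hrn (by omega)
      · have hq2 : (minusSet u S2 S3).card = (minusSet u S2 (O \ S2)).card := by
          rw [hS3]
        rw [if_neg hre, hq2, if_pos ((hcond S2 hS2O).2 (hpar (by omega)))] at habs
        rw [habs, hrho]
        exact arith n r ((r+1)/2) hrn (by omega)
    · have e1 := lam_two u v
      have e2 := lam_odd u v
      have e3 : (O \ S2).card = r - S2.card := by rw [Finset.card_sdiff_of_subset hS2O]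
      have e4 : S2.card ≤ r := Finset.card_le_card hS2O
      rw [wordLength, h1, hS3, hsum, len1]
      rw [← hTw] at e1
      rw [← hO] at e2
      omega
  refine ⟨?_, hwords⟩
  by_cases hre : r % 2 = 0
  · have hset : wordSet u v x1 x2 x3 x4
        = ↑((O.powerset).image (fun S2 => (Tw, S2, O \ S2))) := by
      ext ⟨S1, S2, S3⟩
      simp only [wordSet, Set.mem_setOf_eq, Finset.coe_image, Set.mem_image,
        Finset.mem_coe, Finset.mem_powerset]
      rw [hchar S1 S2 S3]
      constructor
      · rintro ⟨h1, h2, h3, -⟩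
        exact ⟨S2, h2, by rw [h1, h3]⟩
      · rintro ⟨S2', hs, heq⟩
        rw [Prod.ext_iff] at heq
        obtain ⟨e1, heq2⟩ := heq
        rw [Prod.ext_iff] at heq2
        obtain ⟨e2, e3⟩ := heq2
        simp only at e1 e2 e3
        refine ⟨e1.symm, ?_, ?_, fun h => absurd h (by omega)⟩
        · rw [← e2]; exact hs
        · rw [← e2, ← e3]
    rw [hset, Set.ncard_coe_finset,
      Finset.card_image_of_injective _ (fun a b h => by simpa using congrArg (fun p => p.2.1) h),
      Finset.card_powerset]
    rw [hrho, inv_inv, ← pow_mul]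
    push_cast
    congr 1
    omega
  · have hOne : O.Nonempty := Finset.card_pos.1 (by omega)
    have hset : wordSet u v x1 x2 x3 x4
        = ↑(((O.powerset.filter (fun S => S.card % 2 = t)).image
            (fun S2 => (Tw, S2, O \ S2)))) := by
      ext ⟨S1, S2, S3⟩
      simp only [wordSet, Set.mem_setOf_eq, Finset.coe_image, Set.mem_image,
        Finset.mem_coe, Finset.mem_powerset, Finset.mem_filter]
      rw [hchar S1 S2 S3]
      constructor
      · rintro ⟨h1, h2, h3, h4⟩
        exact ⟨S2, ⟨h2, h4 (by omega)⟩, by rw [h1, h3]⟩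
      · rintro ⟨S2', ⟨hs, hpar'⟩, heq⟩
        rw [Prod.ext_iff] at heq
        obtain ⟨e1, heq2⟩ := heq
        rw [Prod.ext_iff] at heq2
        obtain ⟨e2, e3⟩ := heq2
        simp only at e1 e2 e3
        refine ⟨e1.symm, ?_, ?_, fun _ => ?_⟩
        · rw [← e2]; exact hs
        · rw [← e2, ← e3]
        · rw [← e2]; exact hpar'
    rw [hset, Set.ncard_coe_finset,
      Finset.card_image_of_injective _ (fun a b h => by simpa using congrArg (fun p => p.2.1) h),
      count_parity O hOne t (by omega)]
    rw [hrho, inv_inv, ← pow_mul]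
    push_cast
    congr 1
    omega


end Aux

/-- Theorem 1(b): for x = 0100 and x = 1000 there are ρ₁⁻² words of type x; every
such word has aliasing index ρ₁ and length l₁ + 1. -/
theorem theorem1_b (n : ℕ) (hn : 1 ≤ n) (u v : Fin n → Fin 4)
    (x1 x2 x3 x4 : ℕ)
    (hx : (x1, x2, x3, x4) = (0, 1, 0, 0) ∨ (x1, x2, x3, x4) = (1, 0, 0, 0)) :
    ((wordSet u v x1 x2 x3 x4).ncard : ℝ) = ((rho1 u v)⁻¹) ^ 2 ∧
    ∀ S1 S2 S3 : Finset (Fin n), IsWord u v S1 S2 S3 x1 x2 x3 x4 →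
      |Vval u v S1 S2 S3 x1 x2 x3 x4| = rho1 u v ∧
      wordLength S1 S2 S3 x1 x2 x3 x4 = len1 u v + 1 := by
  rcases hx with h | h
  · obtain ⟨e1, e2, e3, e4⟩ : x1 = 0 ∧ x2 = 1 ∧ x3 = 0 ∧ x4 = 0 := by
      simpa [Prod.ext_iff] using h
    subst e1; subst e2; subst e3; subst e4
    exact main_core u v true 0 1 0 0 rfl
      (fun S1 S2 S3 hd => by rw [Vform_cos u v S1 S2 S3 hd]; simp [prt])
  · obtain ⟨e1, e2, e3, e4⟩ : x1 = 1 ∧ x2 = 0 ∧ x3 = 0 ∧ x4 = 0 := by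
      simpa [Prod.ext_iff] using h
    subst e1; subst e2; subst e3; subst e4
    exact main_core u v false 1 0 0 0 rfl
      (fun S1 S2 S3 hd => by rw [Vform_sin u v S1 S2 S3 hd]; simp [prt])
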